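/- arXiv:1909.03712 — 2 statements merged into one kernel-verified Lean document; each statement's English description precedes it below -/
import Mathlib

section
/- Let β > 0, k ∈ {1,…,N−1}, and let d ∈ ℝ^N with entries sorted in nondecreasing order d_1 ≤ d_2 ≤ … ≤ d_N. Let α > 0 and let s* be the unique minimizer of ‖s + d/(4αβ)‖₂² over the simplex { s ∈ ℝ^N : Σ_j s_j = 1, s_j ≥ 0 }, written as s*_j = (−d_j/(4αβ) + φ)_+ with φ = 1/k + (1/(4kαβ)) Σ_{j=1}^k d_j. If s*_k > 0 and s*_{k+1} = 0, then α satisfies (1/(2β)) ( (k/2) d_k − (1/2) Σ_{j=1}^k d_j ) < α ≤ (1/(2β)) ( (k/2) d_{k+1} − (1/2) Σ_{j=1}^k d_j ). -/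
/-- Let `β > 0`, `k ∈ {1,…,N-1}`, and `d ∈ ℝ^N` sorted in
nondecreasing order. Let `α > 0` and let `s*` be the unique minimizer of
`‖s + d/(4αβ)‖₂²` over the simplex, written as `s* j = (-(d j)/(4αβ) + φ)₊`
with `φ = 1/k + (1/(4 k α β)) ∑_{j≤k} d j` (1-based indexing; here `d ⟨k-1⟩` is
the `k`-th smallest entry). If `s*_k > 0` and `s*_{k+1} = 0`, then
`(1/(2β)) ((k/2) d_k - (1/2) ∑_{j=1}^k d_j) < α ≤ (1/(2β)) ((k/2) d_{k+1} - (1/2) ∑_{j=1}^k d_j)`. -/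
theorem alpha_interval_from_neighbour_number
    (N k : ℕ) (hk : 1 ≤ k) (hkN : k < N)
    (β : ℝ) (hβ : 0 < β) (α : ℝ) (hα : 0 < α)
    (d : Fin N → ℝ) (hd_mono : Monotone d)
    (s : Fin N → ℝ) (φ : ℝ)
    (hsum : ∑ j, s j = 1) (hnonneg : ∀ j, 0 ≤ s j)
    (hmin : ∀ t : Fin N → ℝ, (∑ j, t j = 1 ∧ ∀ j, 0 ≤ t j) →
      ∑ j, (s j + d j / (4 * α * β)) ^ 2 ≤ ∑ j, (t j + d j / (4 * α * β)) ^ 2)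
    (hform : ∀ j, s j = max (-(d j) / (4 * α * β) + φ) 0)
    (hφ : φ = 1 / (k : ℝ) +
      (1 / (4 * (k : ℝ) * α * β)) *
        ∑ j ∈ Finset.univ.filter (fun j : Fin N => (j : ℕ) < k), d j)
    (hsk : 0 < s ⟨k - 1, by omega⟩)
    (hsk1 : s ⟨k, hkN⟩ = 0) :
    (1 / (2 * β)) * (((k : ℝ) / 2) * d ⟨k - 1, by omega⟩ -
        (1 / 2) * ∑ j ∈ Finset.univ.filter (fun j : Fin N => (j : ℕ) < k), d j)
      < α ∧
    α ≤ (1 / (2 * β)) * (((k : ℝ) / 2) * d ⟨k, hkN⟩ -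
        (1 / 2) * ∑ j ∈ Finset.univ.filter (fun j : Fin N => (j : ℕ) < k), d j) := by
  have hk' : (1:ℝ) ≤ (k:ℝ) := by exact_mod_cast hk
  have hkpos : (0:ℝ) < (k:ℝ) := by linarith
  have h1 := hsk
  rw [hform ⟨k - 1, by omega⟩] at h1
  have h1' : 0 < -(d ⟨k - 1, by omega⟩) / (4 * α * β) + φ := by
    by_contra h
    push_neg at h
    rw [max_eq_right h] at h1
    exact lt_irrefl _ h1
  have h2 := hsk1
  rw [hform ⟨k, hkN⟩] at h2
  have h2' : -(d ⟨k, hkN⟩) / (4 * α * β) + φ ≤ 0 := by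
    by_contra h
    push_neg at h
    rw [max_eq_left h.le] at h2
    linarith
  rw [hφ] at h1' h2'
  set S := ∑ j ∈ Finset.univ.filter (fun j : Fin N => (j : ℕ) < k), d j with hS
  set a := d ⟨k - 1, by omega⟩
  set b := d ⟨k, hkN⟩
  have hA : (0:ℝ) < α * β := mul_pos hα hβ
  have hpos : (0:ℝ) < 4 * (k:ℝ) * α * β := by positivity
  have key1 : (k:ℝ) * a < 4 * α * β + S := by
    have h := h1'
    field_simp at h
    nlinarith [h, hpos]
  have key2 : 4 * α * β + S ≤ (k:ℝ) * b := by
    have h := h2'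
    rw [div_add' _ _ _ (by positivity), div_nonpos_iff] at h
    rcases h with ⟨h1n, h2n⟩ | ⟨h1n, h2n⟩
    · nlinarith [h2n, hA]
    · field_simp at h1n
      nlinarith [h1n]
  constructor
  · rw [div_mul_eq_mul_div, div_lt_iff₀ (by positivity)]
    nlinarith [key1]
  · rw [div_mul_eq_mul_div, le_div_iff₀ (by positivity)]
    nlinarith [key2]
end

section
/- Let L ∈ ℝ^{N×N} be symmetric positive semidefinite, partitioned into blocks L = [[L_ll, L_lu], [L_ul, L_uu]] according to a split N = l + u with 1 ≤ l < N, and suppose L_uu ∈ ℝ^{u×u} is invertible. Fix Y_l ∈ ℝ^{l×c}. Then the matrix F* = [Y_l; F*_u] with F*_u = −L_uu^{-1} L_ul Y_l is a global minimizer of Tr(Fᵀ L F) over all F ∈ ℝ^{N×c} whose first l rows equal Y_l; i.e., Tr((F*)ᵀ L F*) ≤ Tr(Fᵀ L F) for every F ∈ ℝ^{N×c} with F_l = Y_l. -/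
open Matrix in
lemma psd_trace_nonneg {n : Type*} [Fintype n] [DecidableEq n] {M : Matrix n n ℝ}
    (h : M.PosSemidef) : 0 ≤ M.trace := by
  rw [Matrix.trace]
  apply Finset.sum_nonneg
  intro i _
  exact h.diag_nonneg

open Matrix in
/-- Let `L ∈ ℝ^{N×N}` (with `N = l + u`, indices `Fin l ⊕ Fin u`)
be symmetric positive semidefinite, with blocks `L_ll = L.toBlocks₁₁`,
`L_lu = L.toBlocks₁₂`, `L_ul = L.toBlocks₂₁`, `L_uu = L.toBlocks₂₂`, and suppose
`L_uu` is invertible. Fix `Y_l ∈ ℝ^{l×c}`. Then `F* = [Y_l; F*_u]` with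
`F*_u = -L_uu⁻¹ L_ul Y_l` is a global minimizer of `Tr (Fᵀ L F)` over all
`F ∈ ℝ^{N×c}` whose labeled block (first `l` rows) equals `Y_l`. -/
theorem label_propagation_update_is_global_minimizer
    (l u c : ℕ) (hl : 0 < l) (hu : 0 < u)
    (L : Matrix (Fin l ⊕ Fin u) (Fin l ⊕ Fin u) ℝ) (hL : L.PosSemidef)
    (hLuu : IsUnit L.toBlocks₂₂)
    (Y : Matrix (Fin l) (Fin c) ℝ)
    (Fstar : Matrix (Fin l ⊕ Fin u) (Fin c) ℝ)
    (hFstar : Fstar = Matrix.fromRows Y (-(L.toBlocks₂₂⁻¹ * L.toBlocks₂₁ * Y))) :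
    ∀ F : Matrix (Fin l ⊕ Fin u) (Fin c) ℝ,
      (∀ i j, F (Sum.inl i) j = Y i j) →
      (Fstarᵀ * L * Fstar).trace ≤ (Fᵀ * L * F).trace := by
  intro F hF
  have hsym : Lᵀ = L := hL.1
  -- L_uu * (L_uu⁻¹ * (L_ul * Y)) = L_ul * Y
  have h1 : L.toBlocks₂₂ * (L.toBlocks₂₂⁻¹ * L.toBlocks₂₁ * Y) = L.toBlocks₂₁ * Y := by
    rw [← Matrix.mul_assoc, ← Matrix.mul_assoc,
      Matrix.mul_nonsing_inv _ ((Matrix.isUnit_iff_isUnit_det _).mp hLuu), Matrix.one_mul]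
  -- the unlabeled rows of L * Fstar vanish
  have hLFs : L * Fstar
      = Matrix.fromRows (L.toBlocks₁₁ * Y + L.toBlocks₁₂ * (-(L.toBlocks₂₂⁻¹ * L.toBlocks₂₁ * Y)))
        (0 : Matrix (Fin u) (Fin c) ℝ) := by
    rw [hFstar]
    conv_lhs => rw [← Matrix.fromBlocks_toBlocks L]
    rw [Matrix.fromBlocks_mul_fromRows]
    simp only [Matrix.toBlocks_fromBlocks₂₁, Matrix.toBlocks_fromBlocks₂₂]
    simp only [Matrix.mul_neg]
    rw [h1]
    simp
  have hLF : ∀ k j, (L * Fstar) (Sum.inr k) j = 0 := by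
    intro k j
    rw [hLFs, Matrix.fromRows_apply_inr, Matrix.zero_apply]
  set D : Matrix (Fin l ⊕ Fin u) (Fin c) ℝ := F - Fstar with hD
  have hDl : ∀ i j, D (Sum.inl i) j = 0 := by
    intro i j
    simp [hD, hF, hFstar, Matrix.sub_apply]
  have hFeq : F = Fstar + D := by simp [hD]
  -- cross term vanishes
  have hcross : (Dᵀ * L * Fstar).trace = 0 := by
    rw [Matrix.mul_assoc]
    set M := L * Fstar with hM
    rw [Matrix.trace]
    apply Finset.sum_eq_zero
    intro j _
    simp only [Matrix.diag_apply, Matrix.mul_apply, Matrix.transpose_apply,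
      Fintype.sum_sum_type]
    rw [Finset.sum_eq_zero, Finset.sum_eq_zero, add_zero]
    · intro k _; rw [hLF k j, mul_zero]
    · intro i _; rw [hDl i j, zero_mul]
  have hcross' : (Fstarᵀ * L * Dᵀᵀ).trace = 0 := by
    rw [Matrix.transpose_transpose]
    calc (Fstarᵀ * L * D).trace = ((Fstarᵀ * L * D)ᵀ).trace := (Matrix.trace_transpose _).symm
    _ = (Dᵀ * L * Fstar).trace := by
        rw [Matrix.transpose_mul, Matrix.transpose_mul, hsym, Matrix.transpose_transpose,
          Matrix.mul_assoc]
    _ = 0 := hcross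
  have hpsd : 0 ≤ (Dᵀ * L * D).trace := by
    have : (Dᴴ * L * D).PosSemidef := hL.conjTranspose_mul_mul_same D
    have h := psd_trace_nonneg this
    simpa [Matrix.conjTranspose_eq_transpose_of_trivial] using h
  have expand : (Fᵀ * L * F).trace
      = (Fstarᵀ * L * Fstar).trace + (Dᵀ * L * D).trace := by
    rw [hFeq]
    simp only [Matrix.transpose_add, Matrix.add_mul, Matrix.mul_add, Matrix.trace_add]
    rw [hcross]
    have := hcross'
    rw [Matrix.transpose_transpose] at this
    rw [this]
    ring
  rw [expand]
  linarith
end
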